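/- Let μ_a < μ_b be small dominant weights of an irreducible reduced root system R. If α is a root with ⟨μ_a, α⟩ = 0 and ⟨μ_b, α⟩ ≠ 0, then ⟨μ, α⟩ = 0 for every dominant weight μ with μ ≤ μ_a. -/

import Mathlib

open RealInnerProductSpace

noncomputable section

variable {E : Type*} [NormedAddCommGroup E] [InnerProductSpace ℝ E] [FiniteDimensional ℝ E]

/-- The coroot `α∨ = 2α/⟨α,α⟩` of a vector `α`. -/
def coroot (α : E) : E := (2 / ⟪α, α⟫) • α

/-- The orthogonal reflection across the hyperplane perpendicular to `α`. -/
def reflAt (α : E) : E ≃ₗᵢ[ℝ] E := Submodule.reflection (ℝ ∙ α)ᗮ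

/-- An irreducible reduced crystallographic root system with a choice of positive roots. -/
structure IsRootSystem (R Rpos : Finset E) : Prop where
  pos_subset : Rpos ⊆ R
  ne_zero : ∀ α ∈ R, α ≠ 0
  span_top : Submodule.span ℝ (R : Set E) = ⊤
  reduced : ∀ α ∈ R, ∀ c : ℝ, c • α ∈ (R : Set E) → c = 1 ∨ c = -1
  refl_mem : ∀ α ∈ R, ∀ β ∈ R, reflAt α β ∈ R
  cryst : ∀ α ∈ R, ∀ β ∈ R, ∃ k : ℤ, ⟪β, coroot α⟫ = (k : ℝ)
  pos_split : ∀ α ∈ R, Xor' (α ∈ Rpos) (-α ∈ Rpos)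
  pos_closed : ∀ α ∈ Rpos, ∀ β ∈ Rpos, α + β ∈ R → α + β ∈ Rpos
  irreducible : ∀ S : Finset E, S ⊆ R → S.Nonempty → S ≠ R →
    ∃ α ∈ S, ∃ β ∈ R, β ∉ S ∧ ⟪α, β⟫ ≠ 0

/-- The Weyl group: the subgroup of linear isometries generated by the root reflections. -/
def weylGroup (R : Finset E) : Subgroup (E ≃ₗᵢ[ℝ] E) :=
  Subgroup.closure (reflAt '' (R : Set E))

/-- A weight: an element with integral pairings against all coroots. -/
def IsWeight (R : Finset E) (x : E) : Prop := ∀ α ∈ R, ∃ k : ℤ, ⟪x, coroot α⟫ = (k : ℝ)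

/-- Dominant: nonnegative pairing with all positive roots. -/
def IsDominant (Rpos : Finset E) (x : E) : Prop := ∀ α ∈ Rpos, 0 ≤ ⟪x, α⟫

/-- Dominance order: `μ ≤ λ` iff `λ - μ` is a nonnegative integer combination of positive
roots, i.e. lies in the additive submonoid generated by the positive roots. -/
def domLE (Rpos : Finset E) (μ lam : E) : Prop :=
  lam - μ ∈ AddSubmonoid.closure (Rpos : Set E)

/-- Strict dominance order. -/
def domLT (Rpos : Finset E) (μ lam : E) : Prop := domLE Rpos μ lam ∧ μ ≠ lam

/-- A small weight: a dominant weight pairing at most `2` with every positive coroot. -/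
def IsSmall (R Rpos : Finset E) (ω : E) : Prop :=
  IsDominant Rpos ω ∧ IsWeight R ω ∧ ∀ α ∈ Rpos, ⟪ω, coroot α⟫ ≤ 2

/-- A minuscule weight: a nonzero dominant weight pairing at most `1` with every positive
coroot. -/
def IsMinuscule (R Rpos : Finset E) (ω : E) : Prop :=
  IsDominant Rpos ω ∧ IsWeight R ω ∧ ω ≠ 0 ∧ ∀ α ∈ Rpos, ⟪ω, coroot α⟫ ≤ 1

/-- The Weyl orbit of a point. -/
def weylOrbit (R : Finset E) (x : E) : Set E := {y | ∃ w ∈ weylGroup R, w x = y}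

section Helpers

set_option linter.unusedSectionVars false

variable {R Rpos : Finset E} (hRS : IsRootSystem R Rpos)

lemma int_le_neg_one' {x : ℝ} (k : ℤ) (hk : x = (k : ℝ)) (h : x < 0) : x ≤ -1 := by
  have hk0 : k < 0 := by exact_mod_cast hk ▸ h
  have : k ≤ -1 := by omega
  rw [hk]; exact_mod_cast this

lemma int_le_neg_two' {x : ℝ} (k : ℤ) (hk : x = (k : ℝ)) (h : x < 0) (h1 : x ≠ -1) :
    x ≤ -2 := by
  have hk0 : k < 0 := by exact_mod_cast hk ▸ h
  have hk1 : k ≠ -1 := by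
    intro hc; apply h1; rw [hk, hc]; norm_num
  have : k ≤ -2 := by omega
  rw [hk]; exact_mod_cast this

lemma inner_coroot' (x γ : E) : ⟪x, coroot γ⟫ = 2 / ⟪γ, γ⟫ * ⟪x, γ⟫ := by
  simp [coroot, real_inner_smul_right]

include hRS in
lemma len_pos' {γ : E} (h : γ ∈ R) : (0:ℝ) < ⟪γ, γ⟫ :=
  lt_of_le_of_ne real_inner_self_nonneg (Ne.symm (inner_self_ne_zero.2 (hRS.ne_zero γ h)))

lemma reflAt_apply' (α β : E) :
    reflAt α β = β - (2 * ⟪α, β⟫ / ⟪α, α⟫) • α := by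
  by_cases h : α = 0
  · subst h
    simp only [inner_zero_left, mul_zero, zero_div, zero_smul, sub_zero]
    have hb : β ∈ (ℝ ∙ (0:E))ᗮ := by
      rw [Submodule.mem_orthogonal_singleton_iff_inner_right]
      simp
    exact Submodule.reflection_mem_subspace_eq_self hb
  have hαα : ⟪α, α⟫ ≠ 0 := inner_self_ne_zero.2 h
  set c : ℝ := ⟪α, β⟫ / ⟪α, α⟫ with hc
  have hu : β - c • α ∈ (ℝ ∙ α)ᗮ := by
    rw [Submodule.mem_orthogonal_singleton_iff_inner_right, inner_sub_right,
      real_inner_smul_right, hc]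
    field_simp; ring
  have hv : c • α ∈ (ℝ ∙ α)ᗮᗮ := by
    rw [Submodule.orthogonal_orthogonal]
    exact Submodule.smul_mem _ _ (Submodule.mem_span_singleton_self α)
  have h1 : reflAt α (β - c • α) = β - c • α := Submodule.reflection_mem_subspace_eq_self hu
  have h2 : reflAt α (c • α) = -(c • α) :=
    Submodule.reflection_mem_subspace_orthogonalComplement_eq_neg hv
  have h3 : β = (β - c • α) + c • α := by abel
  calc reflAt α β = reflAt α ((β - c • α) + c • α) := by rw [← h3]
    _ = (β - c • α) + -(c • α) := by rw [(reflAt α).map_add, h1, h2]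
    _ = β - (2 * ⟪α, β⟫ / ⟪α, α⟫) • α := by
        rw [hc]; match_scalars; field_simp; ring

include hRS in
lemma pairing_le_neg_one' {γ δ : E} (hγ : γ ∈ R) (hδ : δ ∈ R) (h : ⟪δ, γ⟫ < 0) :
    ⟪δ, coroot γ⟫ ≤ -1 := by
  obtain ⟨k, hk⟩ := hRS.cryst γ hγ δ hδ
  have hneg : ⟪δ, coroot γ⟫ < 0 := by
    rw [inner_coroot']
    have := len_pos' hRS hγ
    have h2 : 0 < 2 / ⟪γ, γ⟫ := by positivity
    exact mul_neg_of_pos_of_neg h2 h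
  exact int_le_neg_one' k hk hneg

include hRS in
/-- two roots with negative inner product pair at most `-|γ|²/2`. -/
lemma inner_le_neg_half {γ δ : E} (hγ : γ ∈ R) (hδ : δ ∈ R) (h : ⟪δ, γ⟫ < 0) :
    2 * ⟪δ, γ⟫ ≤ -⟪γ, γ⟫ := by
  have h1 := pairing_le_neg_one' hRS hγ hδ h
  rw [inner_coroot'] at h1
  have hp := len_pos' hRS hγ
  rw [div_mul_eq_mul_div, div_le_iff₀ hp] at h1
  nlinarith

include hRS in
/-- Key rank-2 fact: two roots with negative inner product, not opposite, sum to a root. -/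
lemma sum_is_root' {α β : E} (hα : α ∈ R) (hβ : β ∈ R) (h : ⟪α, β⟫ < 0)
    (hne : β ≠ -α) : α + β ∈ R := by
  have hℓα := len_pos' hRS hα
  have hℓβ := len_pos' hRS hβ
  have ha : ⟪β, coroot α⟫ ≤ -1 := pairing_le_neg_one' hRS hα hβ (by rwa [real_inner_comm])
  have hb : ⟪α, coroot β⟫ ≤ -1 := pairing_le_neg_one' hRS hβ hα h
  obtain ⟨ka, hka⟩ := hRS.cryst α hα β hβ
  obtain ⟨kb, hkb⟩ := hRS.cryst β hβ α hα
  by_cases hka1 : ⟪β, coroot α⟫ = -1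
  · have hmem := hRS.refl_mem α hα β hβ
    rw [reflAt_apply'] at hmem
    have he : 2 * ⟪α, β⟫ / ⟪α, α⟫ = ⟪β, coroot α⟫ := by
      rw [inner_coroot', real_inner_comm]; ring
    rw [he, hka1] at hmem
    convert hmem using 1
    module
  by_cases hkb1 : ⟪α, coroot β⟫ = -1
  · have hmem := hRS.refl_mem β hβ α hα
    rw [reflAt_apply'] at hmem
    have he : 2 * ⟪β, α⟫ / ⟪β, β⟫ = ⟪α, coroot β⟫ := by
      rw [inner_coroot', real_inner_comm]; ring
    rw [he, hkb1] at hmem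
    convert hmem using 1
    module
  exfalso
  have hneg_a : ⟪β, coroot α⟫ < 0 := lt_of_le_of_lt ha (by norm_num)
  have hneg_b : ⟪α, coroot β⟫ < 0 := lt_of_le_of_lt hb (by norm_num)
  have ha2 : ⟪β, coroot α⟫ ≤ -2 := int_le_neg_two' ka hka hneg_a hka1
  have hb2 : ⟪α, coroot β⟫ ≤ -2 := int_le_neg_two' kb hkb hneg_b hkb1
  have hprod : (4:ℝ) ≤ ⟪β, coroot α⟫ * ⟪α, coroot β⟫ := by nlinarith
  have hev : ⟪β, coroot α⟫ * ⟪α, coroot β⟫ = 4 * ⟪α, β⟫ ^ 2 / (⟪α, α⟫ * ⟪β, β⟫) := by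
    rw [inner_coroot', inner_coroot', real_inner_comm β α]
    field_simp; ring
  have hcs : ⟪α, β⟫ * ⟪α, β⟫ ≤ ⟪α, α⟫ * ⟪β, β⟫ := real_inner_mul_inner_self_le α β
  have heq : ⟪α, β⟫ ^ 2 = ⟪α, α⟫ * ⟪β, β⟫ := by
    rw [hev, le_div_iff₀ (by positivity)] at hprod
    nlinarith
  have hnorm : ‖⟪α, β⟫‖ = ‖α‖ * ‖β‖ := by
    have h1 : ⟪α, α⟫ = ‖α‖ * ‖α‖ := real_inner_self_eq_norm_mul_norm α
    have h2 : ⟪β, β⟫ = ‖β‖ * ‖β‖ := real_inner_self_eq_norm_mul_norm β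
    have habs := abs_nonneg ⟪α, β⟫
    have hnn : (0:ℝ) ≤ ‖α‖ * ‖β‖ := by positivity
    rw [Real.norm_eq_abs]
    nlinarith [sq_abs ⟪α, β⟫]
  obtain ⟨r, hr0, hr⟩ := (norm_inner_eq_norm_iff (𝕜 := ℝ)
    (hRS.ne_zero α hα) (hRS.ne_zero β hβ)).1 hnorm
  have hred := hRS.reduced α hα r (by rw [← hr]; exact hβ)
  rcases hred with h1 | h1
  · rw [h1, one_smul] at hr
    rw [hr] at h
    exact absurd h (not_lt.2 hℓα.le)
  · rw [h1] at hr
    apply hne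
    rw [hr]; module

include hRS in
/-- positive roots with negative inner product sum to a positive root. -/
lemma sum_pos_root {a b : E} (ha : a ∈ Rpos) (hb : b ∈ Rpos) (hab : ⟪a, b⟫ < 0) :
    a + b ∈ Rpos := by
  have haR := hRS.pos_subset ha
  have hbR := hRS.pos_subset hb
  have hne : b ≠ -a := by
    intro hc
    have hx := hRS.pos_split a haR
    rw [hc] at hb
    rcases hx with ⟨_, h2⟩ | ⟨_, h2⟩
    · exact h2 hb
    · exact h2 ha
  exact hRS.pos_closed a ha b hb (sum_is_root' hRS haR hbR hab hne)

lemma msum_inner' (m : Multiset E) (y : E) :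
    ⟪m.sum, y⟫ = (m.map (fun z => ⟪z, y⟫)).sum := by
  induction m using Multiset.induction_on with
  | empty => simp
  | cons a s ih => simp [inner_add_left, ih]

lemma exists_neg_of_sum_neg' (m : Multiset E) (f : E → ℝ) (h : (m.map f).sum < 0) :
    ∃ a ∈ m, f a < 0 := by
  by_contra hc
  push_neg at hc
  have : (0:ℝ) ≤ (m.map f).sum := Multiset.sum_nonneg (by
    intro y hy
    obtain ⟨a, ha, rfl⟩ := Multiset.mem_map.1 hy
    exact hc a ha)
  linarith

lemma all_zero_of_sum_nonpos' (m : Multiset E) (f : E → ℝ) (hnn : ∀ a ∈ m, 0 ≤ f a)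
    (h : (m.map f).sum ≤ 0) : ∀ a ∈ m, f a = 0 := by
  intro a ha
  have h2 : f a ≤ (m.map f).sum := Multiset.single_le_sum (by
    intro y hy; obtain ⟨b, hb, rfl⟩ := Multiset.mem_map.1 hy; exact hnn b hb) _
    (Multiset.mem_map_of_mem f ha)
  have := hnn a ha
  linarith

include hRS in
lemma exists_good_multiset' [DecidableEq E] : ∀ (n : ℕ) (m : Multiset E), m.card ≤ n →
    (∀ γ ∈ m, γ ∈ Rpos) →
    ∃ m' : Multiset E, (∀ γ ∈ m', γ ∈ Rpos) ∧ m'.sum = m.sum ∧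
      ∀ a ∈ m', ∀ b ∈ m'.erase a, 0 ≤ ⟪a, b⟫ := by
  intro n
  induction n with
  | zero =>
      intro m hcard hmem
      interval_cases h : m.card
      · rw [Multiset.card_eq_zero] at h
        exact ⟨m, hmem, rfl, by subst h; simp⟩
  | succ n ih =>
      intro m hcard hmem
      by_cases hgood : ∀ a ∈ m, ∀ b ∈ m.erase a, 0 ≤ ⟪a, b⟫
      · exact ⟨m, hmem, rfl, hgood⟩
      push_neg at hgood
      obtain ⟨a, ha, b, hb, hab⟩ := hgood
      have hbm : b ∈ m := Multiset.mem_of_mem_erase hb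
      have habR : a + b ∈ Rpos := sum_pos_root hRS (hmem a ha) (hmem b hbm) hab
      set m2 : Multiset E := (a + b) ::ₘ ((m.erase a).erase b) with hm2
      have e2 : (m.erase a).sum = b + ((m.erase a).erase b).sum := by
        conv_lhs => rw [← Multiset.cons_erase hb]
        rw [Multiset.sum_cons]
      have e1 : m.sum = a + (m.erase a).sum := by
        conv_lhs => rw [← Multiset.cons_erase ha]
        rw [Multiset.sum_cons]
      have hsum : m2.sum = m.sum := by
        rw [hm2, Multiset.sum_cons, e1, e2]
        abel
      have hce : (m.erase a).card = m.card - 1 := by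
        rw [Multiset.card_erase_of_mem ha, Nat.pred_eq_sub_one]
      have hce2 : ((m.erase a).erase b).card = (m.erase a).card - 1 := by
        rw [Multiset.card_erase_of_mem hb, Nat.pred_eq_sub_one]
      have h1 : 1 ≤ (m.erase a).card := Multiset.card_pos_iff_exists_mem.2 ⟨b, hb⟩
      have hcard2 : m2.card ≤ n := by
        rw [hm2, Multiset.card_cons, hce2, hce]
        omega
      have hmem2 : ∀ γ ∈ m2, γ ∈ Rpos := by
        intro γ hγ
        rw [hm2, Multiset.mem_cons] at hγ
        rcases hγ with h | h
        · rwa [h]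
        · exact hmem γ (Multiset.mem_of_mem_erase (Multiset.mem_of_mem_erase h))
      obtain ⟨m', h1', h2', h3'⟩ := ih m2 hcard2 hmem2
      exact ⟨m', h1', by rw [h2', hsum], h3'⟩

include hRS in
lemma exists_multiset_of_mem_closure {x : E}
    (hx : x ∈ AddSubmonoid.closure (Rpos : Set E)) :
    ∃ m : Multiset E, (∀ γ ∈ m, γ ∈ Rpos) ∧ m.sum = x := by
  induction hx using AddSubmonoid.closure_induction with
  | mem y hy => exact ⟨{y}, by simpa using hy, by simp⟩
  | zero => exact ⟨0, by simp, by simp⟩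
  | add a b ha hb iha ihb =>
      obtain ⟨m1, h1, hs1⟩ := iha
      obtain ⟨m2, h2, hs2⟩ := ihb
      refine ⟨m1 + m2, ?_, by simp [hs1, hs2]⟩
      intro γ hγ
      rcases Multiset.mem_add.1 hγ with h | h
      exacts [h1 γ h, h2 γ h]

include hRS in
/-- Orthogonal decomposition of a tight element of the positive-root monoid. -/
lemma orth_decomp [DecidableEq E] {x : E}
    (hx : x ∈ AddSubmonoid.closure (Rpos : Set E))
    (tight : ∀ β ∈ Rpos, ⟪x, β⟫ ≤ ⟪β, β⟫) :
    ∃ m : Multiset E, (∀ γ ∈ m, γ ∈ Rpos) ∧ m.sum = x ∧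
      (∀ a ∈ m, ∀ b ∈ m.erase a, ⟪a, b⟫ = 0) ∧ (∀ a ∈ m, ⟪x, a⟫ = ⟪a, a⟫) := by
  obtain ⟨m0, hm0, hs0⟩ := exists_multiset_of_mem_closure hRS hx
  obtain ⟨m, hmem, hsum, hgood⟩ := exists_good_multiset' hRS m0.card m0 le_rfl hm0
  rw [hs0] at hsum
  have hkey : ∀ a ∈ m, (∀ b ∈ m.erase a, ⟪a, b⟫ = 0) ∧ ⟪x, a⟫ = ⟪a, a⟫ := by
    intro a ha
    have hsplit : x = a + (m.erase a).sum := by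
      rw [← hsum]
      conv_lhs => rw [← Multiset.cons_erase ha]
      rw [Multiset.sum_cons]
    have hxa : ⟪x, a⟫ = ⟪a, a⟫ + ((m.erase a).map (fun z => ⟪z, a⟫)).sum := by
      rw [hsplit, inner_add_left, msum_inner']
    have hnn : ∀ b ∈ m.erase a, 0 ≤ (fun z => ⟪z, a⟫) b := by
      intro b hb
      have := hgood a ha b hb
      rwa [real_inner_comm] at this
    have htx : ⟪x, a⟫ ≤ ⟪a, a⟫ := tight a (hmem a ha)
    have hS : ((m.erase a).map (fun z => ⟪z, a⟫)).sum ≤ 0 := by linarith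
    have hzero := all_zero_of_sum_nonpos' (m.erase a) _ hnn hS
    have hSz : ((m.erase a).map (fun z => ⟪z, a⟫)).sum = 0 := by
      apply Multiset.sum_eq_zero
      intro y hy
      obtain ⟨b, hb, rfl⟩ := Multiset.mem_map.1 hy
      exact hzero b hb
    constructor
    · intro b hb
      rw [real_inner_comm]
      exact hzero b hb
    · rw [hxa, hSz, add_zero]
  exact ⟨m, hmem, hsum, fun a ha => (hkey a ha).1, fun a ha => (hkey a ha).2⟩

end Helpers

section MainProof

set_option linter.unusedSectionVars false
set_option maxHeartbeats 1000000

variable {R Rpos : Finset E} (hRS : IsRootSystem R Rpos)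

include hRS in
lemma small_raw {ω : E} (hω : IsSmall R Rpos ω) : ∀ β ∈ Rpos, ⟪ω, β⟫ ≤ ⟪β, β⟫ := by
  intro β hβ
  have h := hω.2.2 β hβ
  rw [inner_coroot'] at h
  have hp := len_pos' hRS (hRS.pos_subset hβ)
  rw [div_mul_eq_mul_div, div_le_iff₀ hp] at h
  nlinarith

end MainProof

/-- if `μ_a < μ_b` are small weights and a root `α` is orthogonal to `μ_a`
but not to `μ_b`, then `α` is orthogonal to every dominant weight `μ ≤ μ_a`. -/
theorem root_orthogonal_to_all_below (R Rpos : Finset E) (hRS : IsRootSystem R Rpos)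
    (μa μb : E) (ha : IsSmall R Rpos μa) (hb : IsSmall R Rpos μb)
    (hab : domLT Rpos μa μb)
    (α : E) (hα : α ∈ R) (h0 : ⟪μa, α⟫ = 0) (h1 : ⟪μb, α⟫ ≠ 0) :
    ∀ μ : E, IsDominant Rpos μ → IsWeight R μ → domLE Rpos μ μa → ⟪μ, α⟫ = 0 := by
  classical
  intro μ hμdom hμwt hμle
  by_contra hμα
  obtain ⟨α', hα'pos, h0', h1', hμα'⟩ :
      ∃ α', α' ∈ Rpos ∧ ⟪μa, α'⟫ = 0 ∧ ⟪μb, α'⟫ ≠ 0 ∧ ⟪μ, α'⟫ ≠ 0 := by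
    rcases hRS.pos_split α hα with ⟨hp, _⟩ | ⟨hp, _⟩
    · exact ⟨α, hp, h0, h1, hμα⟩
    · exact ⟨-α, hp, by simp [h0], by simpa using h1, by simpa using hμα⟩
  have hα'R : α' ∈ R := hRS.pos_subset hα'pos
  have hμpos : 0 < ⟪μ, α'⟫ := (hμdom α' hα'pos).lt_of_ne (Ne.symm hμα')
  have hbpos : 0 < ⟪μb, α'⟫ := (hb.1 α' hα'pos).lt_of_ne (Ne.symm h1')
  have hsa := small_raw hRS ha
  have hsb := small_raw hRS hb
  -- decompose v = μa - μ
  have hvM : μa - μ ∈ AddSubmonoid.closure (Rpos : Set E) := hμle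
  have hvt : ∀ β ∈ Rpos, ⟪μa - μ, β⟫ ≤ ⟪β, β⟫ := by
    intro β hβ
    rw [inner_sub_left]
    have h1 := hμdom β hβ
    have h2 := hsa β hβ
    linarith
  obtain ⟨mv, hmvP, hmvS, hmvO, hmvT⟩ := orth_decomp hRS hvM hvt
  have hvαneg : ⟪μa - μ, α'⟫ < 0 := by
    rw [inner_sub_left, h0']; linarith
  obtain ⟨σ, hσm, hσα⟩ := exists_neg_of_sum_neg' mv (fun z => ⟪z, α'⟫)
    (by rw [← msum_inner', hmvS]; exact hvαneg)
  have hσpos : σ ∈ Rpos := hmvP σ hσm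
  have hσR : σ ∈ R := hRS.pos_subset hσpos
  have hℓσpos : 0 < ⟪σ, σ⟫ := len_pos' hRS hσR
  -- part facts for σ
  have hvσ : ⟪μa - μ, σ⟫ = ⟪σ, σ⟫ := hmvT σ hσm
  have hμaσ : ⟪μa, σ⟫ = ⟪σ, σ⟫ := by
    rw [inner_sub_left] at hvσ
    have h1 := hμdom σ hσpos
    have h2 := hsa σ hσpos
    linarith
  -- β = α' + σ
  have hσα2 : 2 * ⟪σ, α'⟫ ≤ -⟪α', α'⟫ := inner_le_neg_half hRS hα'R hσR hσα
  have hβpos : α' + σ ∈ Rpos :=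
    sum_pos_root hRS hα'pos hσpos (by rwa [real_inner_comm])
  have hℓβ : ⟪α' + σ, α' + σ⟫ = ⟪α', α'⟫ + 2 * ⟪α', σ⟫ + ⟪σ, σ⟫ :=
    real_inner_add_add_self α' σ
  have hμaβ : ⟪μa, α' + σ⟫ = ⟪σ, σ⟫ := by
    rw [inner_add_right, h0', hμaσ, zero_add]
  have hββ : ⟪α' + σ, α' + σ⟫ = ⟪σ, σ⟫ := by
    have hle := hsa _ hβpos
    rw [hμaβ] at hle
    have hcomm : ⟪α', σ⟫ = ⟪σ, α'⟫ := real_inner_comm σ α'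
    rw [hℓβ]
    rw [hℓβ, hcomm] at hle
    linarith
  -- μb pairs < ℓσ with σ
  have hwσneg : ⟪μb - μa, σ⟫ < 0 := by
    have hle := hsb _ hβpos
    rw [hββ, inner_add_right] at hle
    rw [inner_sub_left, hμaσ]
    linarith
  -- decompose w = μb - μa
  have hwM : μb - μa ∈ AddSubmonoid.closure (Rpos : Set E) := hab.1
  have hwt : ∀ β ∈ Rpos, ⟪μb - μa, β⟫ ≤ ⟪β, β⟫ := by
    intro β hβ
    rw [inner_sub_left]
    have h1 := ha.1 β hβ
    have h2 := hsb β hβ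
    linarith
  obtain ⟨mw, hmwP, hmwS, hmwO, hmwT⟩ := orth_decomp hRS hwM hwt
  have hpart : ∀ ρ ∈ mw, ⟪μa, ρ⟫ = 0 ∧ ⟪μb, ρ⟫ = ⟪ρ, ρ⟫ := by
    intro ρ hρ
    have hT := hmwT ρ hρ
    rw [inner_sub_left] at hT
    have h1 := ha.1 ρ (hmwP ρ hρ)
    have h2 := hsb ρ (hmwP ρ hρ)
    constructor <;> linarith
  -- key property of parts pairing negatively with σ
  have hkey : ∀ ρ ∈ mw, ⟪ρ, σ⟫ < 0 →
      2 * ⟪ρ, σ⟫ = -⟪σ, σ⟫ ∧ ⟪ρ, ρ⟫ = ⟪σ, σ⟫ ∧ (ρ + σ ∈ Rpos) ∧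
      ⟪ρ + σ, ρ + σ⟫ = ⟪σ, σ⟫ ∧ ⟪μb, σ⟫ = 0 := by
    intro ρ hρm hρσ
    have hρpos : ρ ∈ Rpos := hmwP ρ hρm
    have hρR : ρ ∈ R := hRS.pos_subset hρpos
    obtain ⟨hμaρ, hμbρ⟩ := hpart ρ hρm
    have hγpos : ρ + σ ∈ Rpos := sum_pos_root hRS hρpos hσpos hρσ
    have hℓγ : ⟪ρ + σ, ρ + σ⟫ = ⟪ρ, ρ⟫ + 2 * ⟪ρ, σ⟫ + ⟪σ, σ⟫ :=
      real_inner_add_add_self ρ σ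
    have hq : 2 * ⟪σ, ρ⟫ ≤ -⟪ρ, ρ⟫ :=
      inner_le_neg_half hRS hρR hσR (by rwa [real_inner_comm])
    have hp : 2 * ⟪ρ, σ⟫ ≤ -⟪σ, σ⟫ := inner_le_neg_half hRS hσR hρR hρσ
    have hμaγ : ⟪μa, ρ + σ⟫ = ⟪σ, σ⟫ := by
      rw [inner_add_right, hμaρ, hμaσ, zero_add]
    have h2 : ⟪σ, σ⟫ ≤ ⟪ρ + σ, ρ + σ⟫ := by
      have := hsa _ hγpos
      rwa [hμaγ] at this
    have hcomm : ⟪σ, ρ⟫ = ⟪ρ, σ⟫ := real_inner_comm ρ σ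
    have hpeq : 2 * ⟪ρ, σ⟫ = -⟪ρ, ρ⟫ := by
      rw [hcomm] at hq
      linarith [hℓγ ▸ h2]
    have hℓγσ : ⟪ρ + σ, ρ + σ⟫ = ⟪σ, σ⟫ := by
      rw [hℓγ]; linarith
    have hμbγle : ⟪μb, ρ + σ⟫ ≤ ⟪σ, σ⟫ := by
      have := hsb _ hγpos
      rwa [hℓγσ] at this
    have hμbγ : ⟪μb, ρ + σ⟫ = ⟪ρ, ρ⟫ + ⟪μb, σ⟫ := by
      rw [inner_add_right, hμbρ]
    have hμbσnn : 0 ≤ ⟪μb, σ⟫ := hb.1 σ hσpos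
    have hρge : ⟪σ, σ⟫ ≤ ⟪ρ, ρ⟫ := by linarith
    have hℓρσ : ⟪ρ, ρ⟫ = ⟪σ, σ⟫ := by linarith
    have hμbσ0 : ⟪μb, σ⟫ = 0 := by linarith
    exact ⟨by linarith, hℓρσ, hγpos, hℓγσ, hμbσ0⟩
  -- find ρ1
  obtain ⟨ρ1, hρ1m, hρ1σ⟩ := exists_neg_of_sum_neg' mw (fun z => ⟪z, σ⟫)
    (by rw [← msum_inner', hmwS]; exact hwσneg)
  obtain ⟨hpeq1, hℓρ1, hγ1pos, hℓγ1, hμbσ0⟩ := hkey ρ1 hρ1m hρ1σ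
  have hwσval : ⟪μb - μa, σ⟫ = -⟪σ, σ⟫ := by
    rw [inner_sub_left, hμbσ0, hμaσ]; ring
  -- find ρ2 in the rest
  have hsplitw : (mw.erase ρ1).sum = (μb - μa) - ρ1 := by
    have h2 : ρ1 + (mw.erase ρ1).sum = μb - μa := by
      rw [← hmwS]
      conv_rhs => rw [← Multiset.cons_erase hρ1m]
      rw [Multiset.sum_cons]
    rw [← h2]; abel
  have hrest : ((mw.erase ρ1).map (fun z => ⟪z, σ⟫)).sum < 0 := by
    rw [← msum_inner', hsplitw, inner_sub_left, hwσval]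
    linarith
  obtain ⟨ρ2, hρ2e, hρ2σ⟩ := exists_neg_of_sum_neg' (mw.erase ρ1) (fun z => ⟪z, σ⟫) hrest
  have hρ2m : ρ2 ∈ mw := Multiset.mem_of_mem_erase hρ2e
  obtain ⟨hpeq2, hℓρ2, hγ2pos, hℓγ2, -⟩ := hkey ρ2 hρ2m hρ2σ
  have horth : ⟪ρ1, ρ2⟫ = 0 := hmwO ρ1 hρ1m ρ2 hρ2e
  -- ζ = (ρ1 + σ) + ρ2
  have hγ1ρ2 : ⟪ρ1 + σ, ρ2⟫ < 0 := by
    rw [inner_add_left]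
    have hc1 : ⟪ρ1, ρ2⟫ = 0 := horth
    have hc2 : ⟪σ, ρ2⟫ = ⟪ρ2, σ⟫ := real_inner_comm ρ2 σ
    rw [hc1, hc2]
    linarith
  have hζpos : (ρ1 + σ) + ρ2 ∈ Rpos :=
    sum_pos_root hRS hγ1pos (hmwP ρ2 hρ2m) hγ1ρ2
  have hℓζ : ⟪(ρ1 + σ) + ρ2, (ρ1 + σ) + ρ2⟫ = ⟪σ, σ⟫ := by
    have he : ⟪(ρ1 + σ) + ρ2, (ρ1 + σ) + ρ2⟫
        = ⟪ρ1 + σ, ρ1 + σ⟫ + 2 * ⟪ρ1 + σ, ρ2⟫ + ⟪ρ2, ρ2⟫ :=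
      real_inner_add_add_self (ρ1 + σ) ρ2
    have hc : ⟪ρ1 + σ, ρ2⟫ = ⟪ρ2, σ⟫ := by
      rw [inner_add_left, horth, zero_add, real_inner_comm]
    rw [he, hc, hℓγ1, hℓρ2]
    linarith
  have hμbζ : ⟪μb, (ρ1 + σ) + ρ2⟫ = 2 * ⟪σ, σ⟫ := by
    rw [inner_add_right, inner_add_right, (hpart ρ1 hρ1m).2, (hpart ρ2 hρ2m).2,
      hμbσ0, hℓρ1, hℓρ2]
    ring
  have hfinal := hsb _ hζpos
  rw [hμbζ, hℓζ] at hfinal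
  linarith

end
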